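/- Let A be a real N×N matrix that is positive definite in the sense that xᵀAx > 0 for every nonzero x ∈ ℝ^N, and let b ∈ ℝ^N be nonzero. Then there exists α ∈ ℝ such that ‖b − α·Ab‖₂ < ‖b‖₂; consequently the minimum of ‖b − Az‖₂ over z ∈ K_1(A, b) = span{b} is strictly smaller than ‖b‖₂. -/
import Mathlib


open Matrix

/-- The Euclidean norm ‖v‖₂ on ℝ^N. -/
noncomputable def eNorm {N : ℕ} (v : Fin N → ℝ) : ℝ :=
  Real.sqrt (∑ i, (v i) ^ 2)

lemma key_decrease {N : ℕ} (A : Matrix (Fin N) (Fin N) ℝ)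
    (hA : ∀ x : Fin N → ℝ, x ≠ 0 → 0 < x ⬝ᵥ (A *ᵥ x))
    (b : Fin N → ℝ) (hb : b ≠ 0) :
    ∃ α : ℝ, eNorm (b - α • (A *ᵥ b)) < eNorm b := by
  set c : Fin N → ℝ := A *ᵥ b with hc
  have hp : 0 < b ⬝ᵥ c := hA b hb
  have hp' : (0:ℝ) < ∑ i, b i * c i := hp
  have hcne : c ≠ 0 := by
    intro h
    rw [h] at hp
    simp [dotProduct] at hp
  have hs : (0:ℝ) < ∑ i, (c i) ^ 2 := by
    have h0 : ∑ i, (c i) ^ 2 ≠ 0 := by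
      intro h
      apply hcne
      funext i
      have := (Finset.sum_eq_zero_iff_of_nonneg (fun i _ => sq_nonneg (c i))).mp h i (Finset.mem_univ i)
      exact pow_eq_zero_iff (n := 2) (by norm_num) |>.mp this
    exact lt_of_le_of_ne (Finset.sum_nonneg fun i _ => sq_nonneg _) (Ne.symm h0)
  set p : ℝ := ∑ i, b i * c i with hpdef
  set s : ℝ := ∑ i, (c i) ^ 2 with hsdef
  refine ⟨p / s, ?_⟩
  unfold eNorm
  apply Real.sqrt_lt_sqrt (Finset.sum_nonneg fun i _ => sq_nonneg _)
  have hexp : ∑ i, ((b - (p/s) • c) i) ^ 2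
      = (∑ i, (b i)^2) - (2 * (p/s) * p - (p/s)^2 * s) := by
    rw [hpdef, hsdef]
    simp only [Pi.sub_apply, Pi.smul_apply, smul_eq_mul, Finset.mul_sum,
      ← Finset.sum_sub_distrib]
    apply Finset.sum_congr rfl
    intro i _
    ring
  rw [hexp]
  have hkey : 0 < 2 * (p/s) * p - (p/s)^2 * s := by
    have hsne : s ≠ 0 := ne_of_gt hs
    have : 2 * (p/s) * p - (p/s)^2 * s = p^2 / s := by
      field_simp
      ring
    rw [this]
    positivity
  linarith

/-- If A is a real N×N matrix with xᵀAx > 0 for every nonzero x, and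
b ≠ 0, then there exists α ∈ ℝ with ‖b − α·Ab‖₂ < ‖b‖₂; consequently the minimum of
‖b − Az‖₂ over z ∈ K_1(A, b) = span{b} is strictly smaller than ‖b‖₂. -/
theorem one_step_residual_decrease_of_posdef
    {N : ℕ} (A : Matrix (Fin N) (Fin N) ℝ)
    (hA : ∀ x : Fin N → ℝ, x ≠ 0 → 0 < x ⬝ᵥ (A *ᵥ x))
    (b : Fin N → ℝ) (hb : b ≠ 0) :
    (∃ α : ℝ, eNorm (b - α • (A *ᵥ b)) < eNorm b) ∧
    ∃ z ∈ Submodule.span ℝ {b}, eNorm (b - A *ᵥ z) < eNorm b := by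
  obtain ⟨α, hα⟩ := key_decrease A hA b hb
  refine ⟨⟨α, hα⟩, α • b, ?_, ?_⟩
  · exact Submodule.smul_mem _ α (Submodule.mem_span_singleton_self b)
  · rwa [Matrix.mulVec_smul]
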